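/- Let Δ ⊂ ℝⁿ be a nondegenerate simplex with vertex index set N = {0,…,n}, and for nonempty K ⊂ N let b_K denote the barycenter of the face Δ_K. For every convex f : Δ → ℝ, Avg(f, Δ) ≤ (1/(n+1)) · Σ_{k=1}^{n+1} (1/C(n+1,k)) · Σ_{K ⊂ N, |K| = k} f(b_K). -/

import Mathlib

open MeasureTheory Finset

noncomputable section AvgFaceAux
variable {n : ℕ}
abbrev Euc (n : ℕ) := EuclideanSpace ℝ (Fin n)


def bas (x : Fin (n+1) → Euc n) (hx : AffineIndependent ℝ x) : AffineBasis (Fin (n+1)) ℝ (Euc n) :=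
  ⟨x, hx, by
    rw [hx.affineSpan_eq_top_iff_card_eq_finrank_add_one]
    simp [finrank_euclideanSpace_fin]⟩

def comboMap (c : Fin (n+1) → (Euc n →ᵃ[ℝ] ℝ)) (p : Fin (n+1) → Euc n) : Euc n →ᵃ[ℝ] Euc n where
  toFun y := ∑ i, c i y • p i
  linear := ∑ i, ((c i).linear).smulRight (p i)
  map_vadd' q v := by
    simp only [LinearMap.coe_sum, LinearMap.sum_apply, LinearMap.smulRight_apply]
    simp only [vadd_eq_add]
    rw [← Finset.sum_add_distrib]
    refine Finset.sum_congr rfl fun i _ => ?_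
    have : c i (v + q) = (c i).linear v + c i q := by
      have := (c i).map_vadd q v
      simpa [vadd_eq_add] using this
    rw [this, add_smul]

lemma comboMap_apply (c : Fin (n+1) → (Euc n →ᵃ[ℝ] ℝ)) (p : Fin (n+1) → Euc n) (y : Euc n) :
    comboMap c p y = ∑ i, c i y • p i := rfl

lemma affineMap_sum_apply {ι} (s : Finset ι) (F : ι → (Euc n →ᵃ[ℝ] ℝ)) (y : Euc n) :
    (∑ i ∈ s, F i) y = ∑ i ∈ s, F i y := by
  induction s using Finset.cons_induction with
  | empty => simp
  | cons a s ha ih => simp [Finset.sum_cons, AffineMap.coe_add, ih]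

lemma vol_image_affine (A : Euc n →ᵃ[ℝ] Euc n) (s : Set (Euc n)) :
    volume (A '' s) = ENNReal.ofReal |A.linear.det| * volume s := by
  have hd : (A : Euc n → Euc n) = (fun v => A 0 + v) ∘ ⇑A.linear := by
    rw [A.decomp]; funext v; simp [add_comm]
  rw [hd, Set.image_comp]
  have h1 : (fun v : Euc n => A 0 + v) '' (⇑A.linear '' s)
      = (fun v : Euc n => -(A 0) + v) ⁻¹' (⇑A.linear '' s) := by
    ext z
    constructor
    · rintro ⟨v, hv, rfl⟩; simpa using hv
    · intro hz; exact ⟨-(A 0) + z, hz, add_neg_cancel_left _ _⟩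
  rw [h1, measure_preimage_add, Measure.addHaar_image_linearMap]

lemma affine_integral_image {A B : Euc n →ᵃ[ℝ] Euc n} (hAB : ∀ y, A (B y) = y)
    (hBA : ∀ y, B (A y) = y) (hdet : ENNReal.ofReal |A.linear.det| = 1)
    (s : Set (Euc n)) (g : Euc n → ℝ) :
    ∫ y in A '' s, g y = ∫ y in s, g (A y) := by
  have hcA : Continuous A := A.continuous_of_finiteDimensional
  have hcB : Continuous B := B.continuous_of_finiteDimensional
  let homeo : Homeomorph (Euc n) (Euc n) :=
    ⟨⟨A, B, fun y => hBA y, fun y => hAB y⟩, hcA, hcB⟩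
  have hemb : MeasurableEmbedding (A : Euc n → Euc n) := by
    have h1 : MeasurableEmbedding homeo := homeo.isClosedEmbedding.measurableEmbedding
    have h2 : ⇑homeo = ⇑A := funext fun y => rfl
    rwa [h2] at h1
  have hdetB : ENNReal.ofReal |B.linear.det| = 1 := by
    have hcomp : A.comp B = AffineMap.id ℝ (Euc n) := AffineMap.ext hAB
    have : (A.comp B).linear = A.linear.comp B.linear := rfl
    have hdet1 : A.linear.det * B.linear.det = 1 := by
      rw [← LinearMap.det_comp, ← this, hcomp]
      simp
    have habs : |A.linear.det| * |B.linear.det| = 1 := by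
      rw [← abs_mul, hdet1]; norm_num
    have h1 : ENNReal.ofReal (|A.linear.det| * |B.linear.det|) = 1 := by rw [habs]; simp
    rw [ENNReal.ofReal_mul (abs_nonneg _), hdet] at h1
    simpa using h1
  have hmp : MeasurePreserving (A : Euc n → Euc n) volume volume := by
    refine ⟨hcA.measurable, ?_⟩
    refine Measure.ext fun t ht => ?_
    rw [Measure.map_apply hcA.measurable ht]
    have himg : (A : Euc n → Euc n) ⁻¹' t = ⇑B '' t := by
      ext y
      constructor
      · intro hy; exact ⟨A y, hy, hBA y⟩
      · rintro ⟨z, hz, rfl⟩; simpa [hAB z] using hz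
    rw [himg, vol_image_affine, hdetB, one_mul]
  exact hmp.setIntegral_image_emb hemb g s

lemma exists_perm_image {K K' : Finset (Fin (n+1))} (h : K.card = K'.card) :
    ∃ π : Equiv.Perm (Fin (n+1)), K.image π = K' := by
  classical
  have h1 : Fintype.card {a // a ∈ K} = Fintype.card {a // a ∈ K'} := by
    simpa [Fintype.card_coe] using h
  have h2 : Fintype.card {a : Fin (n+1) // a ∉ K} = Fintype.card {a : Fin (n+1) // a ∉ K'} := by
    rw [Fintype.card_subtype_compl, Fintype.card_subtype_compl, h1]
  let e₁ : {a // a ∈ K} ≃ {a // a ∈ K'} := Fintype.equivOfCardEq h1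
  let e₂ : {a : Fin (n+1) // a ∉ K} ≃ {a : Fin (n+1) // a ∉ K'} := Fintype.equivOfCardEq h2
  let π : Equiv.Perm (Fin (n+1)) :=
    ((Equiv.sumCompl (· ∈ K)).symm.trans (e₁.sumCongr e₂)).trans (Equiv.sumCompl (· ∈ K'))
  refine ⟨π, ?_⟩
  apply Finset.eq_of_subset_of_card_le
  · intro a ha
    rw [Finset.mem_image] at ha
    obtain ⟨b, hb, rfl⟩ := ha
    have : π b = (e₁ ⟨b, hb⟩ : Fin (n+1)) := by
      simp only [π, Equiv.trans_apply, Equiv.sumCompl_symm_apply_of_pos hb, Equiv.sumCongr_apply,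
        Sum.map_inl, Equiv.sumCompl_apply_inl]
    rw [this]
    exact (e₁ ⟨b, hb⟩).2
  · rw [Finset.card_image_of_injective _ π.injective, h]

lemma image_powersetCard_bij (τ : Equiv.Perm (Fin (n+1))) (k : ℕ) (G : Finset (Fin (n+1)) → ℝ) :
    ∑ K ∈ Finset.powersetCard k (Finset.univ : Finset (Fin (n+1))), G (K.image τ)
      = ∑ K ∈ Finset.powersetCard k (Finset.univ : Finset (Fin (n+1))), G K := by
  classical
  refine Finset.sum_nbij' (fun K => K.image τ) (fun K => K.image τ.symm) ?_ ?_ ?_ ?_ ?_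
  · intro K hK
    rw [Finset.mem_powersetCard_univ] at *
    rw [Finset.card_image_of_injective _ τ.injective]; exact hK
  · intro K hK
    rw [Finset.mem_powersetCard_univ] at *
    rw [Finset.card_image_of_injective _ τ.symm.injective]; exact hK
  · intro K hK
    simp [Finset.image_image, Function.comp_def]
  · intro K hK
    simp [Finset.image_image, Function.comp_def]
  · intro K hK; rfl

lemma perm_prefix_sum (P : Finset (Fin (n+1))) {k : ℕ} (hP : P.card = k)
    (G : Finset (Fin (n+1)) → ℝ) :
    ((n+1).choose k : ℝ) * ∑ σ : Equiv.Perm (Fin (n+1)), G (P.image σ)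
      = ((Nat.factorial (n+1)) : ℝ)
        * ∑ K ∈ Finset.powersetCard k (Finset.univ : Finset (Fin (n+1))), G K := by
  classical
  set h : Finset (Fin (n+1)) → ℝ := fun K => ∑ σ : Equiv.Perm (Fin (n+1)), G (K.image σ)
    with hh
  have hconst : ∀ K ∈ Finset.powersetCard k (Finset.univ : Finset (Fin (n+1))), h K = h P := by
    intro K hK
    rw [Finset.mem_powersetCard_univ] at hK
    obtain ⟨π, hπ⟩ := exists_perm_image (K := P) (K' := K) (by rw [hP, hK])
    rw [hh]
    simp only
    rw [← hπ]
    have himg : ∀ σ : Equiv.Perm (Fin (n+1)),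
        (P.image ⇑π).image ⇑σ = P.image ⇑(σ * π) := by
      intro σ
      rw [Finset.image_image]
      rfl
    rw [Finset.sum_congr rfl fun σ _ => by rw [himg σ]]
    exact (Equiv.sum_comp (Equiv.mulRight π) (fun σ => G (P.image ⇑σ)))
  have hA : ∑ K ∈ Finset.powersetCard k (Finset.univ : Finset (Fin (n+1))), h K
      = ((n+1).choose k : ℕ) • h P := by
    rw [Finset.sum_congr rfl hconst, Finset.sum_const, Finset.card_powersetCard,
      Finset.card_univ, Fintype.card_fin]
  have hB : ∑ K ∈ Finset.powersetCard k (Finset.univ : Finset (Fin (n+1))), h K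
      = (Nat.factorial (n+1) : ℕ)
          • ∑ K ∈ Finset.powersetCard k (Finset.univ : Finset (Fin (n+1))), G K := by
    rw [hh]
    simp only
    rw [Finset.sum_comm]
    have : ∀ σ : Equiv.Perm (Fin (n+1)),
        ∑ K ∈ Finset.powersetCard k (Finset.univ : Finset (Fin (n+1))), G (K.image ⇑σ)
          = ∑ K ∈ Finset.powersetCard k (Finset.univ : Finset (Fin (n+1))), G K :=
      fun σ => image_powersetCard_bij σ k G
    rw [Finset.sum_congr rfl fun σ _ => this σ, Finset.sum_const, Finset.card_univ]
    congr 1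
    rw [Fintype.card_perm, Fintype.card_fin]
  have := hA.symm.trans hB
  rw [nsmul_eq_mul, nsmul_eq_mul] at this
  push_cast at this ⊢
  rw [this]

section Main
variable (x : Fin (n+1) → Euc n) (hx : AffineIndependent ℝ x)

def W (σ : Equiv.Perm (Fin (n+1))) (k : ℕ) : Euc n →ᵃ[ℝ] ℝ :=
  if h : k < n+1 then (bas x hx).coord (σ ⟨k, h⟩) else 0

def lam (σ : Equiv.Perm (Fin (n+1))) (k : ℕ) : Euc n →ᵃ[ℝ] ℝ :=
  ((k : ℝ)+1) • (W x hx σ k - W x hx σ (k+1))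

lemma lam_apply (σ) (k : ℕ) (y : Euc n) :
    lam x hx σ k y = ((k : ℝ)+1) * (W x hx σ k y - W x hx σ (k+1) y) := rfl

def SS (σ : Equiv.Perm (Fin (n+1))) : Set (Euc n) := {y | ∀ k < n+1, 0 ≤ lam x hx σ k y}

def Kset (σ : Equiv.Perm (Fin (n+1))) (k : ℕ) : Finset (Fin (n+1)) :=
  (Finset.univ.filter fun i : Fin (n+1) => (i : ℕ) ≤ k).image σ

def bb (σ : Equiv.Perm (Fin (n+1))) (k : ℕ) : Euc n :=
  ((k : ℝ)+1)⁻¹ • ∑ i ∈ Kset σ k, x i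

def Xv (σ : Equiv.Perm (Fin (n+1))) (j : ℕ) : Euc n :=
  if h : j < n+1 then x (σ ⟨j, h⟩) else 0

lemma Kset_card (σ : Equiv.Perm (Fin (n+1))) {k : ℕ} (hk : k < n+1) : (Kset σ k).card = k + 1 := by
  rw [Kset, Finset.card_image_of_injective _ σ.injective]
  have : (Finset.univ.filter fun i : Fin (n+1) => (i : ℕ) ≤ k) =
      (Finset.Iic (⟨k, hk⟩ : Fin (n+1))) := by
    ext i; simp [Fin.le_def]
  rw [this, Fin.card_Iic]

lemma Kset_sum (σ : Equiv.Perm (Fin (n+1))) {k : ℕ} (hk : k < n+1) :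
    ∑ i ∈ Kset σ k, x i = ∑ j ∈ Finset.range (k+1), Xv x σ j := by
  rw [Kset, Finset.sum_image (fun a _ b _ h => σ.injective h)]
  refine Finset.sum_nbij' (fun i => (i : ℕ)) (fun j => if h : j < n+1 then ⟨j, h⟩ else 0) ?_ ?_ ?_ ?_ ?_
  · intro a ha; simp only [mem_filter, mem_univ, true_and] at ha
    simp [Finset.mem_range, Nat.lt_succ_iff, ha]
  · intro j hj; simp only [Finset.mem_range, Nat.lt_succ_iff] at hj
    have hj' : j < n+1 := lt_of_le_of_lt hj hk
    simp [hj', mem_filter, hj]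
  · intro a ha; simp [a.isLt]
  · intro j hj; simp only [Finset.mem_range, Nat.lt_succ_iff] at hj
    have hj' : j < n+1 := lt_of_le_of_lt hj hk
    simp [hj']
  · intro a ha; simp only [mem_filter, mem_univ, true_and] at ha
    have hj' : (a : ℕ) < n+1 := a.isLt
    simp [Xv, hj']

lemma abelsum {M : Type*} [AddCommGroup M] [Module ℝ M] (u : ℕ → ℝ) (v : ℕ → M) (m : ℕ) :
    ∑ k ∈ range m, (u k - u (k+1)) • (∑ j ∈ range (k+1), v j)
      = (∑ j ∈ range m, u j • v j) - u m • ∑ j ∈ range m, v j := by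
  induction m with
  | zero => simp
  | succ m ih =>
    rw [Finset.sum_range_succ, ih, Finset.sum_range_succ (fun j => u j • v j),
      Finset.sum_range_succ v, sub_smul, smul_add, smul_add]
    abel

lemma W_last (σ) (y : Euc n) : W x hx σ (n+1) y = 0 := by simp [W]

lemma lam_smul_bb (σ) {k : ℕ} (hk : k < n+1) (y : Euc n) :
    lam x hx σ k y • bb x σ k
      = (W x hx σ k y - W x hx σ (k+1) y) • ∑ j ∈ Finset.range (k+1), Xv x σ j := by
  rw [lam_apply, bb, Kset_sum x σ hk, smul_smul]
  congr 1
  have : (k : ℝ) + 1 ≠ 0 := by positivity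
  field_simp

lemma sum_lam_smul_bb (σ) (y : Euc n) :
    ∑ k ∈ range (n+1), lam x hx σ k y • bb x σ k = y := by
  have h1 : ∀ k ∈ range (n+1), lam x hx σ k y • bb x σ k
      = (W x hx σ k y - W x hx σ (k+1) y) • ∑ j ∈ Finset.range (k+1), Xv x σ j := by
    intro k hk; exact lam_smul_bb x hx σ (Finset.mem_range.mp hk) y
  rw [Finset.sum_congr rfl h1, abelsum (fun k => W x hx σ k y) (Xv x σ) (n+1),
    W_last, zero_smul, sub_zero]
  have h2 : ∑ j ∈ range (n+1), W x hx σ j y • Xv x σ j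
      = ∑ i : Fin (n+1), (bas x hx).coord (σ i) y • x (σ i) := by
    rw [← Fin.sum_univ_eq_sum_range (fun j => W x hx σ j y • Xv x σ j) (n+1)]
    refine Finset.sum_congr rfl fun i _ => ?_
    simp [W, Xv, i.isLt]
  rw [h2]
  rw [Equiv.sum_comp σ (fun i => (bas x hx).coord i y • x i)]
  exact (bas x hx).linear_combination_coord_eq_self y

lemma sum_lam (σ) (y : Euc n) : ∑ k ∈ range (n+1), lam x hx σ k y = 1 := by
  have h1 : ∀ k ∈ range (n+1), lam x hx σ k y
      = (W x hx σ k y - W x hx σ (k+1) y) • ∑ j ∈ Finset.range (k+1), (1:ℝ) := by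
    intro k hk
    rw [lam_apply]
    simp only [Finset.sum_const, Finset.card_range, nsmul_eq_mul, mul_one, smul_eq_mul]
    push_cast; ring
  rw [Finset.sum_congr rfl h1, abelsum (fun k => W x hx σ k y) (fun _ => (1:ℝ)) (n+1),
    W_last, zero_smul, sub_zero]
  have h2 : ∑ j ∈ range (n+1), W x hx σ j y • (1:ℝ)
      = ∑ i : Fin (n+1), (bas x hx).coord (σ i) y := by
    rw [← Fin.sum_univ_eq_sum_range (fun j => W x hx σ j y • (1:ℝ)) (n+1)]
    refine Finset.sum_congr rfl fun i _ => ?_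
    simp [W, i.isLt]
  rw [h2, Equiv.sum_comp σ (fun i => (bas x hx).coord i y)]
  exact (bas x hx).sum_coord_apply_eq_one y

lemma bb_mem' (σ) {k : ℕ} (hk : k < n+1) : bb x σ k ∈ convexHull ℝ (Set.range x) := by
  rw [bb, Finset.smul_sum]
  refine (convex_convexHull ℝ _).sum_mem (fun i _ => by positivity)
    ?_ (fun i _ => subset_convexHull ℝ _ (Set.mem_range_self i))
  rw [Finset.sum_const, Kset_card σ hk, nsmul_eq_mul]
  push_cast
  field_simp

lemma SS_subset (σ) : SS x hx σ ⊆ convexHull ℝ (Set.range x) := by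
  intro y hy
  rw [← sum_lam_smul_bb x hx σ y]
  refine (convex_convexHull ℝ _).sum_mem (fun k hk => hy k (Finset.mem_range.mp hk))
    (sum_lam x hx σ y) (fun k hk => bb_mem' x σ (Finset.mem_range.mp hk))

lemma jensen {f : Euc n → ℝ} (hf : ConvexOn ℝ (convexHull ℝ (Set.range x)) f)
    (σ) {y : Euc n} (hy : y ∈ SS x hx σ) :
    f y ≤ ∑ k ∈ range (n+1), lam x hx σ k y * f (bb x σ k) := by
  have := hf.map_sum_le (t := range (n+1)) (w := fun k => lam x hx σ k y) (p := fun k => bb x σ k)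
    (fun k hk => hy k (Finset.mem_range.mp hk)) (sum_lam x hx σ y)
    (fun k hk => bb_mem' x σ (Finset.mem_range.mp hk))
  rwa [sum_lam_smul_bb x hx σ y] at this

lemma coord_nonneg {y : Euc n} (hy : y ∈ convexHull ℝ (Set.range x)) (i : Fin (n+1)) :
    0 ≤ (bas x hx).coord i y := by
  have h : convexHull ℝ (Set.range ⇑(bas x hx)) = {z | ∀ i, 0 ≤ (bas x hx).coord i z} :=
    (bas x hx).convexHull_eq_nonneg_coord
  have hxy : y ∈ {z | ∀ i, 0 ≤ (bas x hx).coord i z} := by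
    rw [← h]; exact hy
  exact hxy i

lemma exists_mem_SS {y : Euc n} (hy : y ∈ convexHull ℝ (Set.range x)) :
    ∃ σ, y ∈ SS x hx σ := by
  set w : Fin (n+1) → ℝ := fun i => (bas x hx).coord i y with hw
  refine ⟨(Fin.revPerm).trans (Tuple.sort w), ?_⟩
  have hanti : ∀ a b : Fin (n+1), a ≤ b →
      w ((Fin.revPerm.trans (Tuple.sort w)) b) ≤ w ((Fin.revPerm.trans (Tuple.sort w)) a) := by
    intro a b hab
    exact Tuple.monotone_sort w (by simpa using Fin.rev_le_rev.mpr hab)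
  intro k hk
  rw [lam_apply]
  have h1 : 0 ≤ (k:ℝ) + 1 := by positivity
  refine mul_nonneg h1 (sub_nonneg.mpr ?_)
  by_cases hk1 : k + 1 < n + 1
  · rw [W, W, dif_pos hk, dif_pos hk1]
    exact hanti ⟨k, hk⟩ ⟨k+1, hk1⟩ (by simp [Fin.le_def])
  · rw [W, W, dif_pos hk, dif_neg hk1]
    exact coord_nonneg x hx hy _

lemma W_antitone (σ) {y : Euc n} (hy : y ∈ SS x hx σ) {a b : ℕ} (hab : a ≤ b) :
    W x hx σ b y ≤ W x hx σ a y := by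
  refine antitone_nat_of_succ_le (f := fun k => W x hx σ k y) (fun k => ?_) hab
  show W x hx σ (k+1) y ≤ W x hx σ k y
  by_cases hk : k < n + 1
  · have h := hy k hk
    rw [lam_apply] at h
    nlinarith [h, Nat.cast_nonneg (α := ℝ) k]
  · have h1 : ¬ (k + 1 < n + 1) := by omega
    rw [W, W, dif_neg hk, dif_neg h1]

lemma coord_eq_null {i j : Fin (n+1)} (hij : i ≠ j) :
    volume {y : Euc n | (bas x hx).coord i y = (bas x hx).coord j y} = 0 := by
  set g : Euc n →ᵃ[ℝ] ℝ := (bas x hx).coord i - (bas x hx).coord j with hg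
  set A : AffineSubspace ℝ (Euc n) :=
    AffineSubspace.comap g (⊥ : Submodule ℝ ℝ).toAffineSubspace with hA
  have hset : {y : Euc n | (bas x hx).coord i y = (bas x hx).coord j y} = (A : Set (Euc n)) := by
    ext y
    simp only [hA, AffineSubspace.coe_comap, Set.mem_preimage, Set.mem_setOf_eq,
      SetLike.mem_coe, Submodule.mem_toAffineSubspace, Submodule.mem_bot, hg,
      AffineMap.coe_sub, Pi.sub_apply, sub_eq_zero]
  rw [hset]
  refine Measure.addHaar_affineSubspace volume A ?_
  intro htop
  have hmem : x i ∈ A := htop ▸ AffineSubspace.mem_top ℝ _ _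
  have hg0 : g (x i) = 0 := by
    have := hmem
    rw [hA] at this
    simpa [AffineSubspace.mem_comap, Submodule.mem_toAffineSubspace, Submodule.mem_bot] using this
  rw [hg] at hg0
  simp only [AffineMap.coe_sub, Pi.sub_apply] at hg0
  have h1 : (bas x hx).coord i (x i) = 1 := (bas x hx).coord_apply_eq i
  have h2 : (bas x hx).coord j (x i) = 0 := (bas x hx).coord_apply_ne hij.symm
  rw [h1, h2] at hg0
  norm_num at hg0

lemma W_val (σ : Equiv.Perm (Fin (n+1))) (i : Fin (n+1)) :
    W x hx σ (i : ℕ) = (bas x hx).coord (σ i) := by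
  simp [W, i.isLt]

lemma SS_inter_null {σ τ : Equiv.Perm (Fin (n+1))} (h : σ ≠ τ) :
    volume (SS x hx σ ∩ SS x hx τ) = 0 := by
  have hne : (Finset.univ.filter fun k : Fin (n+1) => σ k ≠ τ k).Nonempty := by
    by_contra hc
    rw [Finset.not_nonempty_iff_eq_empty, Finset.filter_eq_empty_iff] at hc
    exact h (Equiv.ext fun k => not_not.mp (hc (Finset.mem_univ k)))
  set F := Finset.univ.filter fun k : Fin (n+1) => σ k ≠ τ k with hF
  set k0 := F.min' hne with hk0
  have hk0F : k0 ∈ F := F.min'_mem hne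
  have hk0ne : σ k0 ≠ τ k0 := by
    have := hk0F
    rw [hF, Finset.mem_filter] at this
    exact this.2
  have hmin : ∀ k' : Fin (n+1), k' < k0 → σ k' = τ k' := by
    intro k' hk'
    by_contra hc
    exact absurd (F.min'_le k' (by rw [hF, Finset.mem_filter]; exact ⟨Finset.mem_univ _, hc⟩))
      (not_le.mpr hk')
  have key : ∀ (α β : Equiv.Perm (Fin (n+1))), (∀ k' < k0, α k' = β k') →
      k0 ≤ α.symm (β k0) := by
    intro α β hmin' 
    by_contra hc
    push_neg at hc
    have h1 : α (α.symm (β k0)) = β (α.symm (β k0)) := hmin' _ hc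
    rw [Equiv.apply_symm_apply] at h1
    have h2 := β.injective h1
    rw [← h2] at hc
    exact lt_irrefl _ hc
  refine measure_mono_null (fun y hy => ?_) (coord_eq_null x hx hk0ne)
  obtain ⟨hyσ, hyτ⟩ := hy
  have m1 : k0 ≤ σ.symm (τ k0) := key σ τ hmin
  have m2 : k0 ≤ τ.symm (σ k0) := key τ σ (fun k' h' => (hmin k' h').symm)
  have a1 : (bas x hx).coord (τ k0) y ≤ (bas x hx).coord (σ k0) y := by
    have := W_antitone x hx σ hyσ (a := (k0 : ℕ)) (b := ((σ.symm (τ k0)) : ℕ)) m1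
    rwa [W_val x hx σ (σ.symm (τ k0)), W_val x hx σ k0, Equiv.apply_symm_apply] at this
  have a2 : (bas x hx).coord (σ k0) y ≤ (bas x hx).coord (τ k0) y := by
    have := W_antitone x hx τ hyτ (a := (k0 : ℕ)) (b := ((τ.symm (σ k0)) : ℕ)) m2
    rwa [W_val x hx τ (τ.symm (σ k0)), W_val x hx τ k0, Equiv.apply_symm_apply] at this
  exact le_antisymm a2 a1

lemma coord_csum (w : Fin (n+1) → ℝ) (hw : ∑ i, w i = 1) (j : Fin (n+1)) :
    (bas x hx).coord j (∑ i, w i • x i) = w j := by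
  have h : ∑ i, w i • x i = Finset.univ.affineCombination ℝ x w :=
    (Finset.univ.affineCombination_eq_linear_combination x w hw).symm
  rw [h]
  exact (bas x hx).coord_apply_combination_of_mem (Finset.mem_univ j) hw

-- ### the vertex-permuting maps

def Amap (τ : Equiv.Perm (Fin (n+1))) : Euc n →ᵃ[ℝ] Euc n :=
  comboMap (fun i => (bas x hx).coord i) (fun i => x (τ i))

lemma coord_Amap (τ) (j : Fin (n+1)) (y : Euc n) :
    (bas x hx).coord j (Amap x hx τ y) = (bas x hx).coord (τ.symm j) y := by
  have h : Amap x hx τ y = ∑ i, (bas x hx).coord (τ.symm i) y • x i := by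
    rw [Amap, comboMap_apply, ← Equiv.sum_comp τ (fun i => (bas x hx).coord (τ.symm i) y • x i)]
    simp
  rw [h, coord_csum]
  exact (Equiv.sum_comp τ.symm (fun i => (bas x hx).coord i y)).trans
    ((bas x hx).sum_coord_apply_eq_one y)

lemma W_Amap (σ τ) (k : ℕ) (y : Euc n) :
    W x hx σ k (Amap x hx τ y) = W x hx (σ.trans τ.symm) k y := by
  by_cases h : k < n+1
  · rw [W, W, dif_pos h, dif_pos h, coord_Amap]; rfl
  · rw [W, W, dif_neg h, dif_neg h]; rfl

lemma lam_Amap (σ τ) (k : ℕ) (y : Euc n) :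
    lam x hx σ k (Amap x hx τ y) = lam x hx (σ.trans τ.symm) k y := by
  rw [lam_apply, lam_apply, W_Amap, W_Amap]

lemma Amap_comp (τ τ' : Equiv.Perm (Fin (n+1))) (y : Euc n) :
    Amap x hx τ (Amap x hx τ' y) = Amap x hx (τ'.trans τ) y := by
  refine (bas x hx).ext_elem fun j => ?_
  rw [coord_Amap, coord_Amap, coord_Amap]
  rfl

lemma Amap_id (y : Euc n) : Amap x hx (Equiv.refl _) y = y := by
  refine (bas x hx).ext_elem fun j => ?_
  rw [coord_Amap]
  rfl

lemma Amap_surj (τ) : Function.Surjective (Amap x hx τ) := fun z =>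
  ⟨Amap x hx τ.symm z, by rw [Amap_comp, Equiv.symm_trans_self]; exact Amap_id x hx z⟩

lemma Amap_preimage_SS (σ τ) : Amap x hx τ ⁻¹' SS x hx σ = SS x hx (σ.trans τ.symm) := by
  ext y
  simp only [Set.mem_preimage, SS, Set.mem_setOf_eq]
  constructor
  · intro h k hk; rw [← lam_Amap]; exact h k hk
  · intro h k hk; rw [lam_Amap]; exact h k hk

lemma Amap_image_SS (σ : Equiv.Perm (Fin (n+1))) :
    Amap x hx σ '' SS x hx (Equiv.refl _) = SS x hx σ := by
  have h := Amap_preimage_SS x hx σ σ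
  rw [Equiv.self_trans_symm] at h
  rw [← h]
  exact Set.image_preimage_eq _ (Amap_surj x hx σ)

lemma Amap_vertex (τ) (i : Fin (n+1)) : Amap x hx τ (x i) = x (τ i) := by
  refine (bas x hx).ext_elem fun j => ?_
  rw [coord_Amap]
  rcases eq_or_ne j (τ i) with rfl | hne
  · rw [Equiv.symm_apply_apply]
    exact ((bas x hx).coord_apply_eq i).trans ((bas x hx).coord_apply_eq (τ i)).symm
  · have h1 : τ.symm j ≠ i := fun hc => hne (by rw [← hc, Equiv.apply_symm_apply])
    exact ((bas x hx).coord_apply_ne h1).trans ((bas x hx).coord_apply_ne hne).symm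

lemma Amap_image_Delta (τ) :
    Amap x hx τ '' convexHull ℝ (Set.range x) = convexHull ℝ (Set.range x) := by
  rw [AffineMap.image_convexHull]
  congr 1
  ext z
  constructor
  · rintro ⟨-, ⟨i, rfl⟩, rfl⟩; rw [Amap_vertex]; exact Set.mem_range_self _
  · rintro ⟨i, rfl⟩; exact ⟨x (τ.symm i), Set.mem_range_self _, by rw [Amap_vertex, Equiv.apply_symm_apply]⟩

def pn (π : Equiv.Perm (Fin (n+1))) (k : ℕ) : ℕ :=
  if h : k < n+1 then (π ⟨k, h⟩ : ℕ) else k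

lemma pn_lt (π) {k : ℕ} (hk : k < n+1) : pn (n := n) π k < n+1 := by
  rw [pn, dif_pos hk]; exact (π ⟨k, hk⟩).isLt

lemma pn_pn (π π' : Equiv.Perm (Fin (n+1))) {k : ℕ} (hk : k < n+1) :
    pn π' (pn π k) = pn (n := n) (π.trans π') k := by
  rw [pn, pn, pn, dif_pos hk, dif_pos ((π ⟨k, hk⟩).isLt), dif_pos hk]
  simp [Equiv.trans_apply]

lemma pn_symm_pn (π : Equiv.Perm (Fin (n+1))) {k : ℕ} (hk : k < n+1) :
    pn π.symm (pn π k) = k := by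
  rw [pn_pn _ _ hk, pn, dif_pos hk]
  simp

lemma pn_refl {k : ℕ} : pn (n := n) (Equiv.refl _) k = k := by
  rw [pn]; split <;> simp

-- ### the lambda-permuting maps

def ciT (π : Equiv.Perm (Fin (n+1))) (j : ℕ) : Euc n →ᵃ[ℝ] ℝ :=
  ∑ k ∈ range (n+1), (if j ≤ pn π k then ((pn π k : ℝ)+1)⁻¹ else 0) • lam x hx (Equiv.refl _) k

lemma ciT_apply (π) (j : ℕ) (y : Euc n) :
    ciT x hx π j y
      = ∑ k ∈ range (n+1), (if j ≤ pn π k then ((pn π k : ℝ)+1)⁻¹ else 0)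
          * lam x hx (Equiv.refl _) k y := by
  rw [ciT, affineMap_sum_apply]
  refine Finset.sum_congr rfl fun k _ => ?_
  rw [AffineMap.coe_smul]
  rfl

lemma count_le {m : ℕ} (hm : m < n+1) (c : ℝ) :
    ∑ j : Fin (n+1), (if (j : ℕ) ≤ m then c else 0) = ((m : ℝ)+1) * c := by
  rw [Finset.sum_ite, Finset.sum_const_zero, add_zero, Finset.sum_const]
  have : (Finset.univ.filter fun j : Fin (n+1) => (j : ℕ) ≤ m) =
      (Finset.Iic (⟨m, hm⟩ : Fin (n+1))) := by
    ext i; simp [Fin.le_def]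
  rw [this, Fin.card_Iic, nsmul_eq_mul]
  push_cast
  ring

lemma sum_ciT (π) (y : Euc n) : ∑ j : Fin (n+1), ciT x hx π (j : ℕ) y = 1 := by
  have h : ∀ j : Fin (n+1), ciT x hx π (j : ℕ) y
      = ∑ k ∈ range (n+1), (if ((j : ℕ)) ≤ pn π k then ((pn π k : ℝ)+1)⁻¹ else 0)
          * lam x hx (Equiv.refl _) k y := fun j => ciT_apply x hx π _ y
  rw [Finset.sum_congr rfl (fun j _ => h j), Finset.sum_comm]
  have h2 : ∀ k ∈ range (n+1),
      ∑ j : Fin (n+1), (if ((j : ℕ)) ≤ pn π k then ((pn π k : ℝ)+1)⁻¹ else 0)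
        * lam x hx (Equiv.refl _) k y = lam x hx (Equiv.refl _) k y := by
    intro k hk
    rw [← Finset.sum_mul]
    rw [count_le (pn_lt π (Finset.mem_range.mp hk))]
    rw [mul_inv_cancel₀ (by positivity), one_mul]
  rw [Finset.sum_congr rfl h2]
  exact sum_lam x hx _ y

def Tmap (π : Equiv.Perm (Fin (n+1))) : Euc n →ᵃ[ℝ] Euc n :=
  comboMap (fun j : Fin (n+1) => ciT x hx π (j : ℕ)) x

lemma coord_Tmap (π) (j : Fin (n+1)) (y : Euc n) :
    (bas x hx).coord j (Tmap x hx π y) = ciT x hx π (j : ℕ) y := by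
  rw [Tmap, comboMap_apply]
  exact coord_csum x hx _ (sum_ciT x hx π y) j

lemma ciT_top (π) (y : Euc n) : ciT x hx π (n+1) y = 0 := by
  rw [ciT_apply]
  refine Finset.sum_eq_zero fun k hk => ?_
  rw [if_neg (by have := pn_lt (n := n) π (Finset.mem_range.mp hk); omega), zero_mul]

lemma W_Tmap (π) (j : ℕ) (hj : j ≤ n+1) (y : Euc n) :
    W x hx (Equiv.refl _) j (Tmap x hx π y) = ciT x hx π j y := by
  by_cases h : j < n+1
  · rw [W, dif_pos h]
    have := coord_Tmap x hx π ⟨j, h⟩ y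
    exact this
  · have hj1 : j = n+1 := by omega
    subst hj1
    rw [W, dif_neg (by omega), ciT_top]
    rfl

lemma ciT_diff (π) {k : ℕ} (hk : k < n+1) (y : Euc n) :
    ciT x hx π k y - ciT x hx π (k+1) y
      = ((k : ℝ)+1)⁻¹ * lam x hx (Equiv.refl _) (pn π.symm k) y := by
  rw [ciT_apply, ciT_apply, ← Finset.sum_sub_distrib]
  have h : ∀ m ∈ range (n+1),
      (if k ≤ pn π m then ((pn π m : ℝ)+1)⁻¹ else 0) * lam x hx (Equiv.refl _) m y
        - (if k+1 ≤ pn π m then ((pn π m : ℝ)+1)⁻¹ else 0) * lam x hx (Equiv.refl _) m y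
      = if pn π m = k then ((k : ℝ)+1)⁻¹ * lam x hx (Equiv.refl _) m y else 0 := by
    intro m _
    rcases lt_trichotomy (pn π m) k with hlt | heq | hgt
    · rw [if_neg (by omega), if_neg (by omega), if_neg (by omega)]; ring
    · rw [if_pos (by omega), if_neg (by omega), if_pos heq, heq]; ring
    · rw [if_pos (by omega), if_pos (by omega), if_neg (by omega)]; ring
  rw [Finset.sum_congr rfl h]
  rw [Finset.sum_eq_single (pn π.symm k)]
  · have hcond : pn π (pn π.symm k) = k := by
      have h2 := pn_symm_pn (n := n) π.symm (k := k) hk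
      simpa using h2
    rw [if_pos hcond]
  · intro m hm hne
    rw [if_neg]
    intro hc
    exact hne (by rw [← hc, pn_symm_pn π (by exact Finset.mem_range.mp hm)])
  · intro hns
    exact absurd (Finset.mem_range.mpr (pn_lt π.symm hk)) hns

lemma lam_Tmap (π) {k : ℕ} (hk : k < n+1) (y : Euc n) :
    lam x hx (Equiv.refl _) k (Tmap x hx π y) = lam x hx (Equiv.refl _) (pn π.symm k) y := by
  rw [lam_apply, W_Tmap x hx π k (by omega), W_Tmap x hx π (k+1) (by omega),
    ciT_diff x hx π hk]
  field_simp

-- downward telescoping: W refl j = ciT refl j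

lemma W_eq_ciT_refl (y : Euc n) :
    ∀ d j, j + d = n + 1 → W x hx (Equiv.refl _) j y = ciT x hx (Equiv.refl _) j y := by
  intro d
  induction d with
  | zero =>
    intro j hj
    have : j = n+1 := by omega
    subst this
    rw [W, dif_neg (by omega), ciT_top]
    rfl
  | succ d ih =>
    intro j hj
    have hjlt : j < n+1 := by omega
    have hW : W x hx (Equiv.refl _) j y
        = ((j : ℝ)+1)⁻¹ * lam x hx (Equiv.refl _) j y + W x hx (Equiv.refl _) (j+1) y := by
      rw [lam_apply]
      field_simp
      ring
    have hc : ciT x hx (Equiv.refl _) j y - ciT x hx (Equiv.refl _) (j+1) y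
        = ((j : ℝ)+1)⁻¹ * lam x hx (Equiv.refl _) (pn (Equiv.refl _).symm j) y :=
      ciT_diff x hx _ hjlt y
    rw [Equiv.refl_symm, pn_refl] at hc
    have hih := ih (j+1) (by omega)
    rw [hW, hih]
    linarith [hc]

lemma lam_ext {y z : Euc n}
    (h : ∀ k < n+1, lam x hx (Equiv.refl _) k y = lam x hx (Equiv.refl _) k z) : y = z := by
  refine (bas x hx).ext_elem fun j => ?_
  have hy := W_eq_ciT_refl x hx y (n+1-(j:ℕ)) j (by omega)
  have hz := W_eq_ciT_refl x hx z (n+1-(j:ℕ)) j (by omega)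
  have hW : ∀ w : Euc n, W x hx (Equiv.refl _) (j : ℕ) w = (bas x hx).coord j w := by
    intro w; rw [W, dif_pos j.isLt]; simp
  rw [← hW y, ← hW z, hy, hz, ciT_apply, ciT_apply]
  refine Finset.sum_congr rfl fun k hk => ?_
  rw [h k (Finset.mem_range.mp hk)]

lemma Tmap_comp (π π' : Equiv.Perm (Fin (n+1))) (y : Euc n) :
    Tmap x hx π (Tmap x hx π' y) = Tmap x hx (π'.trans π) y := by
  refine lam_ext x hx fun k hk => ?_
  rw [lam_Tmap x hx π hk, lam_Tmap x hx π' (pn_lt π.symm hk), lam_Tmap x hx _ hk,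
    pn_pn _ _ hk]
  rfl

lemma Tmap_refl (y : Euc n) : Tmap x hx (Equiv.refl _) y = y := by
  refine lam_ext x hx fun k hk => ?_
  rw [lam_Tmap x hx _ hk, Equiv.refl_symm, pn_refl]

lemma Tmap_surj (π) : Function.Surjective (Tmap x hx π) := fun z =>
  ⟨Tmap x hx π.symm z, by rw [Tmap_comp, Equiv.symm_trans_self]; exact Tmap_refl x hx z⟩

lemma Tmap_preimage_SS (π) :
    Tmap x hx π ⁻¹' SS x hx (Equiv.refl _) = SS x hx (Equiv.refl _) := by
  ext y
  simp only [Set.mem_preimage, SS, Set.mem_setOf_eq]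
  constructor
  · intro h m hm
    have := h (pn π m) (pn_lt π hm)
    rwa [lam_Tmap x hx π (pn_lt π hm), pn_symm_pn π hm] at this
  · intro h k hk
    rw [lam_Tmap x hx π hk]
    exact h _ (pn_lt π.symm hk)

lemma Tmap_image_SS (π : Equiv.Perm (Fin (n+1))) :
    Tmap x hx π '' SS x hx (Equiv.refl _) = SS x hx (Equiv.refl _) := by
  conv_lhs => rw [← Tmap_preimage_SS x hx π]
  exact Set.image_preimage_eq _ (Tmap_surj x hx π)


-- ### measure facts
lemma hD_compact : IsCompact (convexHull ℝ (Set.range x)) :=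
  (Set.finite_range x).isCompact_convexHull ℝ

lemma volD_lt_top : volume (convexHull ℝ (Set.range x)) < ⊤ :=
  (hD_compact x).measure_lt_top

include hx in
lemma volD_pos : 0 < volume (convexHull ℝ (Set.range x)) := by
  have h := (bas x hx).centroid_mem_interior_convexHull
  have hr : Set.range ⇑(bas x hx) = Set.range x := rfl
  rw [hr] at h
  exact Measure.measure_pos_of_nonempty_interior _ ⟨_, h⟩

lemma SS_closed (σ) : IsClosed (SS x hx σ) := by
  have h : SS x hx σ = ⋂ (k : ℕ) (_ : k < n+1), (lam x hx σ k) ⁻¹' (Set.Ici 0) := by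
    ext y; simp [SS, Set.mem_iInter]
  rw [h]
  exact isClosed_iInter fun k => isClosed_iInter fun _ =>
    IsClosed.preimage (lam x hx σ k).continuous_of_finiteDimensional isClosed_Ici

lemma SS_compact (σ) : IsCompact (SS x hx σ) :=
  (hD_compact x).of_isClosed_subset (SS_closed x hx σ) (SS_subset x hx σ)

lemma lam_intOn (σ σ' : Equiv.Perm (Fin (n+1))) (k : ℕ) :
    IntegrableOn (fun y => lam x hx σ k y) (SS x hx σ') volume :=
  ((lam x hx σ k).continuous_of_finiteDimensional).continuousOn.integrableOn_compact
    (SS_compact x hx σ')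

-- ### boundedness of a convex function on the simplex
include hx in
lemma f_bound {f : Euc n → ℝ} (hf : ConvexOn ℝ (convexHull ℝ (Set.range x)) f) :
    ∃ C : ℝ, ∀ y ∈ convexHull ℝ (Set.range x), |f y| ≤ C := by
  set U : ℝ := Finset.univ.sup' Finset.univ_nonempty (fun i => f (x i)) with hU
  have hup : ∀ y ∈ convexHull ℝ (Set.range x), f y ≤ U := by
    intro y hy
    obtain ⟨z, hz, hfz⟩ := hf.exists_ge_of_mem_convexHull (subset_convexHull ℝ _) hy
    obtain ⟨i, rfl⟩ := hz
    exact hfz.trans (Finset.le_sup' (fun i => f (x i)) (Finset.mem_univ i))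
  set c : Euc n := ∑ i, (((n:ℝ)+1)⁻¹) • x i with hc
  have hcsum : ∑ _i : Fin (n+1), (((n:ℝ)+1)⁻¹) = 1 := by
    rw [Finset.sum_const, Finset.card_univ, Fintype.card_fin, nsmul_eq_mul]
    push_cast
    field_simp
  have hcmem : c ∈ convexHull ℝ (Set.range x) := by
    rw [hc]
    exact (convex_convexHull ℝ _).sum_mem (fun i _ => by positivity) hcsum
      (fun i _ => subset_convexHull ℝ _ (Set.mem_range_self i))
  set L : ℝ := ((n:ℝ)+2) * f c - ((n:ℝ)+1) * U with hL
  have hlow : ∀ y ∈ convexHull ℝ (Set.range x), L ≤ f y := by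
    intro y hy
    set w : Fin (n+1) → ℝ := fun i => (bas x hx).coord i y with hw
    have hw0 : ∀ i, 0 ≤ w i := fun i => coord_nonneg x hx hy i
    have hws : ∑ i, w i = 1 := (bas x hx).sum_coord_apply_eq_one y
    have hw1 : ∀ i, w i ≤ 1 := by
      intro i
      rw [← hws]
      exact Finset.single_le_sum (fun j _ => hw0 j) (Finset.mem_univ i)
    set t : ℝ := ((n:ℝ)+2)⁻¹ with ht
    have htpos : 0 < t := by positivity
    have ht1 : t < 1 := by
      rw [ht, inv_eq_one_div, div_lt_one (by positivity)]
      linarith [Nat.cast_nonneg (α := ℝ) n]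
    set u : Fin (n+1) → ℝ := fun i => ((n:ℝ)+2)/(((n:ℝ)+1)^2) - w i/((n:ℝ)+1) with hu
    have hn1 : (0:ℝ) < (n:ℝ)+1 := by positivity
    have hu0 : ∀ i, 0 ≤ u i := by
      intro i
      rw [hu]
      simp only
      rw [sub_nonneg, div_le_div_iff₀ hn1 (by positivity)]
      nlinarith [hw1 i, hw0 i, Nat.cast_nonneg (α := ℝ) n]
    have hus : ∑ i, u i = 1 := by
      rw [hu]
      rw [Finset.sum_sub_distrib, Finset.sum_const, Finset.card_univ, Fintype.card_fin,
        ← Finset.sum_div, hws, nsmul_eq_mul]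
      push_cast
      field_simp
      ring
    set z : Euc n := ∑ i, u i • x i with hz
    have hzmem : z ∈ convexHull ℝ (Set.range x) :=
      (convex_convexHull ℝ _).sum_mem (fun i _ => hu0 i) hus
        (fun i _ => subset_convexHull ℝ _ (Set.mem_range_self i))
    have hcomb : c = t • y + (1-t) • z := by
      have hlin : t • y + (1-t) • z = AffineMap.lineMap y z (1-t) := by
        rw [AffineMap.lineMap_apply_module]
        have h1 : (1:ℝ) - (1-t) = t := by ring
        rw [h1]
      rw [hlin]
      refine (bas x hx).ext_elem fun j => ?_
      have hcj : (bas x hx).coord j c = ((n:ℝ)+1)⁻¹ := by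
        rw [hc]; exact coord_csum x hx _ hcsum j
      have hyj : (bas x hx).coord j (AffineMap.lineMap y z (1-t))
          = AffineMap.lineMap (w j) ((bas x hx).coord j z) (1-t) := by
        exact ((bas x hx).coord j).apply_lineMap y z (1-t)
      have hzj : (bas x hx).coord j z = u j := by
        rw [hz]; exact coord_csum x hx u hus j
      rw [hcj, hyj, hzj, AffineMap.lineMap_apply_module]
      rw [hu]
      simp only
      rw [ht]
      simp only [smul_eq_mul]
      field_simp
      ring
    have hjen : f c ≤ t * f y + (1-t) * f z := by
      rw [hcomb]
      exact hf.2 hy hzmem (le_of_lt htpos) (by linarith) (by ring)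
    have hfz : f z ≤ U := hup z hzmem
    rw [hL]
    have ht2 : t = ((n:ℝ)+2)⁻¹ := ht
    have hne : ((n:ℝ)+2) ≠ 0 := by positivity
    have h3 : ((n:ℝ)+2) * f c ≤ f y + (((n:ℝ)+2) - 1) * f z := by
      calc ((n:ℝ)+2) * f c ≤ ((n:ℝ)+2) * (t * f y + (1-t) * f z) := by
            nlinarith [hjen]
        _ = f y + (((n:ℝ)+2) - 1) * f z := by
            rw [ht2]; field_simp
    have h4 : (((n:ℝ)+2) - 1) * f z ≤ ((n:ℝ)+1) * U := by
      have : (((n:ℝ)+2) - 1) = ((n:ℝ)+1) := by ring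
      rw [this]
      nlinarith [hfz, hn1]
    linarith
  refine ⟨max |U| |L|, fun y hy => ?_⟩
  rw [abs_le]
  constructor
  · have := hlow y hy
    have hL2 : -|L| ≤ L := neg_abs_le L
    have : -(max |U| |L|) ≤ -|L| := by
      simp only [neg_le_neg_iff]
      exact le_max_right _ _
    linarith [hlow y hy, neg_abs_le L]
  · have := hup y hy
    have : U ≤ |U| := le_abs_self U
    linarith [hup y hy, le_abs_self U, le_max_left |U| |L|]

include hx in
lemma f_intOn {f : Euc n → ℝ} (hf : ConvexOn ℝ (convexHull ℝ (Set.range x)) f) :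
    IntegrableOn f (convexHull ℝ (Set.range x)) volume := by
  obtain ⟨C, hC⟩ := f_bound x hx hf
  have hmeas : MeasurableSet (convexHull ℝ (Set.range x)) :=
    (hD_compact x).isClosed.measurableSet
  have hfr : volume (convexHull ℝ (Set.range x) \ interior (convexHull ℝ (Set.range x))) = 0 := by
    refine measure_mono_null ?_ ((convex_convexHull ℝ (Set.range x)).addHaar_frontier volume)
    intro y hy
    exact ⟨subset_closure hy.1, hy.2⟩
  have hres : volume.restrict (convexHull ℝ (Set.range x))
      = volume.restrict (interior (convexHull ℝ (Set.range x))) := by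
    refine Measure.restrict_congr_set (ae_eq_set.mpr ⟨hfr, ?_⟩)
    have h0 : interior (convexHull ℝ (Set.range x)) \ convexHull ℝ (Set.range x) = ∅ := by
      rw [Set.diff_eq_empty]
      exact interior_subset
    rw [h0]
    exact measure_empty
  constructor
  · rw [hres]
    exact (hf.continuousOn_interior).aestronglyMeasurable isOpen_interior.measurableSet
  · refine HasFiniteIntegral.restrict_of_bounded (C := C) (volD_lt_top x) ?_
    refine (ae_restrict_iff' hmeas).mpr (ae_of_all _ (fun y hy => ?_))
    rw [Real.norm_eq_abs]
    exact hC y hy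

-- ### the partition
lemma iUnion_SS : ⋃ σ : Equiv.Perm (Fin (n+1)), SS x hx σ = convexHull ℝ (Set.range x) := by
  apply Set.Subset.antisymm
  · exact Set.iUnion_subset fun σ => SS_subset x hx σ
  · intro y hy
    obtain ⟨σ, hσ⟩ := exists_mem_SS x hx hy
    exact Set.mem_iUnion.mpr ⟨σ, hσ⟩

lemma int_D_eq_sum {g : Euc n → ℝ}
    (hg : IntegrableOn g (convexHull ℝ (Set.range x)) volume) :
    ∫ y in convexHull ℝ (Set.range x), g y
      = ∑ σ : Equiv.Perm (Fin (n+1)), ∫ y in SS x hx σ, g y := by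
  rw [← iUnion_SS x hx]
  rw [integral_iUnion_ae (fun σ => ((SS_closed x hx σ).measurableSet).nullMeasurableSet)
    (fun σ τ hστ => SS_inter_null x hx hστ)
    (by rw [iUnion_SS x hx]; exact hg)]
  exact tsum_fintype _

lemma Amap_det (τ) : ENNReal.ofReal |(Amap x hx τ).linear.det| = 1 := by
  have h := vol_image_affine (Amap x hx τ) (convexHull ℝ (Set.range x))
  rw [Amap_image_Delta x hx τ] at h
  exact (ENNReal.mul_eq_right (volD_pos x hx).ne' (volD_lt_top x).ne).mp h.symm

lemma vol_SS_eq (σ) : volume (SS x hx σ) = volume (SS x hx (Equiv.refl _)) := by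
  rw [← Amap_image_SS x hx σ, vol_image_affine, Amap_det x hx σ, one_mul]

lemma vol_SS_lt_top (σ) : volume (SS x hx σ) < ⊤ :=
  lt_of_le_of_lt (measure_mono (SS_subset x hx σ)) (volD_lt_top x)

lemma vol_sum : (volume (convexHull ℝ (Set.range x))).toReal
    = (Nat.factorial (n+1) : ℝ) * (volume (SS x hx (Equiv.refl _))).toReal := by
  have hone : IntegrableOn (fun _ : Euc n => (1:ℝ)) (convexHull ℝ (Set.range x)) volume := by
    refine integrableOn_const ?_
    exact (volD_lt_top x).ne
  have h := int_D_eq_sum x hx hone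
  rw [setIntegral_const, measureReal_def] at h
  have h2 : ∀ σ : Equiv.Perm (Fin (n+1)),
      ∫ _ in SS x hx σ, (1:ℝ) = (volume (SS x hx (Equiv.refl _))).toReal := by
    intro σ
    rw [setIntegral_const, measureReal_def, vol_SS_eq x hx σ, smul_eq_mul, mul_one]
  rw [Finset.sum_congr rfl (fun σ _ => h2 σ), Finset.sum_const, Finset.card_univ] at h
  rw [smul_eq_mul, mul_one] at h
  rw [h, nsmul_eq_mul, Fintype.card_perm, Fintype.card_fin]

lemma vol_SS_refl_pos : 0 < (volume (SS x hx (Equiv.refl _))).toReal := by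
  have h := vol_sum x hx
  have hV : 0 < (volume (convexHull ℝ (Set.range x))).toReal :=
    ENNReal.toReal_pos (volD_pos x hx).ne' (volD_lt_top x).ne
  have hfac : (0:ℝ) < (Nat.factorial (n+1) : ℝ) := by
    exact_mod_cast Nat.factorial_pos (n+1)
  nlinarith [hV, hfac, h]

lemma vol_SS_refl_ne_zero : volume (SS x hx (Equiv.refl _)) ≠ 0 := by
  intro hc
  have := vol_SS_refl_pos x hx
  rw [hc] at this
  simp at this

lemma Tmap_det (π) : ENNReal.ofReal |(Tmap x hx π).linear.det| = 1 := by
  have h := vol_image_affine (Tmap x hx π) (SS x hx (Equiv.refl _))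
  rw [Tmap_image_SS x hx π] at h
  exact (ENNReal.mul_eq_right (vol_SS_refl_ne_zero x hx) (vol_SS_lt_top x hx _).ne).mp h.symm

-- ### the key integrals
lemma int_lam_eq (σ : Equiv.Perm (Fin (n+1))) (k : ℕ) :
    ∫ y in SS x hx σ, lam x hx σ k y
      = ∫ y in SS x hx (Equiv.refl _), lam x hx (Equiv.refl _) k y := by
  conv_lhs => rw [← Amap_image_SS x hx σ]
  rw [affine_integral_image (B := Amap x hx σ.symm)
    (fun y => by rw [Amap_comp, Equiv.symm_trans_self]; exact Amap_id x hx y)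
    (fun y => by rw [Amap_comp, Equiv.self_trans_symm]; exact Amap_id x hx y)
    (Amap_det x hx σ)]
  simp_rw [lam_Amap x hx σ σ, Equiv.self_trans_symm]

lemma int_lam_perm {k m : ℕ} (hk : k < n+1) (hm : m < n+1) :
    ∫ y in SS x hx (Equiv.refl _), lam x hx (Equiv.refl _) k y
      = ∫ y in SS x hx (Equiv.refl _), lam x hx (Equiv.refl _) m y := by
  set π : Equiv.Perm (Fin (n+1)) := Equiv.swap ⟨k, hk⟩ ⟨m, hm⟩ with hπ
  have hpn : pn π.symm k = m := by
    rw [pn, dif_pos hk, hπ, Equiv.symm_swap, Equiv.swap_apply_left]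
  conv_lhs => rw [← Tmap_image_SS x hx π]
  rw [affine_integral_image (B := Tmap x hx π.symm)
    (fun y => by rw [Tmap_comp, Equiv.symm_trans_self]; exact Tmap_refl x hx y)
    (fun y => by rw [Tmap_comp, Equiv.self_trans_symm]; exact Tmap_refl x hx y)
    (Tmap_det x hx π)]
  have heq : ∀ y : Euc n, lam x hx (Equiv.refl _) k (Tmap x hx π y)
      = lam x hx (Equiv.refl _) m y := by
    intro y
    rw [lam_Tmap x hx π hk, hpn]
  simp_rw [heq]

lemma int_lam_val {k : ℕ} (hk : k < n+1) :
    ∫ y in SS x hx (Equiv.refl _), lam x hx (Equiv.refl _) k y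
      = (volume (convexHull ℝ (Set.range x))).toReal
          / ((Nat.factorial (n+1) : ℝ) * ((n:ℝ)+1)) := by
  have hsum : ∑ m ∈ range (n+1), ∫ y in SS x hx (Equiv.refl _), lam x hx (Equiv.refl _) m y
      = (volume (SS x hx (Equiv.refl _))).toReal := by
    rw [← integral_finset_sum _ (fun m _ => lam_intOn x hx _ _ m)]
    simp_rw [sum_lam x hx (Equiv.refl _)]
    rw [setIntegral_const, measureReal_def, smul_eq_mul, mul_one]
  have hconst : ∀ m ∈ range (n+1),
      ∫ y in SS x hx (Equiv.refl _), lam x hx (Equiv.refl _) m y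
        = ∫ y in SS x hx (Equiv.refl _), lam x hx (Equiv.refl _) k y := by
    intro m hm
    exact int_lam_perm x hx (Finset.mem_range.mp hm) hk
  rw [Finset.sum_congr rfl hconst, Finset.sum_const, Finset.card_range, nsmul_eq_mul] at hsum
  have hvol : (volume (SS x hx (Equiv.refl _))).toReal
      = (volume (convexHull ℝ (Set.range x))).toReal / (Nat.factorial (n+1) : ℝ) := by
    have h := vol_sum x hx
    have hfac : (0:ℝ) < (Nat.factorial (n+1) : ℝ) := by
      exact_mod_cast Nat.factorial_pos (n+1)
    field_simp [h]
    linarith [h]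
  rw [hvol] at hsum
  have hn1 : (0:ℝ) < ((n:ℝ)+1) := by positivity
  have hcast : ((n+1 : ℕ) : ℝ) = (n:ℝ)+1 := by push_cast; ring
  rw [hcast] at hsum
  field_simp at hsum ⊢
  linarith [hsum]

lemma int_SS_f_le {f : Euc n → ℝ} (hf : ConvexOn ℝ (convexHull ℝ (Set.range x)) f) (σ) :
    ∫ y in SS x hx σ, f y
      ≤ ∑ k ∈ range (n+1), (∫ y in SS x hx σ, lam x hx σ k y) * f (bb x σ k) := by
  have hint : ∀ k, IntegrableOn (fun y => lam x hx σ k y * f (bb x σ k)) (SS x hx σ) volume :=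
    fun k => (lam_intOn x hx σ σ k).mul_const _
  have h1 : ∫ y in SS x hx σ, f y
      ≤ ∫ y in SS x hx σ, (∑ k ∈ range (n+1), lam x hx σ k y * f (bb x σ k)) := by
    refine setIntegral_mono_on ((f_intOn x hx hf).mono_set (SS_subset x hx σ))
      (MeasureTheory.integrable_finset_sum _ (fun k _ => hint k))
      (SS_closed x hx σ).measurableSet (fun y hy => jensen x hx hf σ hy)
  calc ∫ y in SS x hx σ, f y
      ≤ ∫ y in SS x hx σ, (∑ k ∈ range (n+1), lam x hx σ k y * f (bb x σ k)) := h1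
    _ = ∑ k ∈ range (n+1), ∫ y in SS x hx σ, lam x hx σ k y * f (bb x σ k) :=
        integral_finset_sum _ (fun k _ => hint k)
    _ = ∑ k ∈ range (n+1), (∫ y in SS x hx σ, lam x hx σ k y) * f (bb x σ k) := by
        refine Finset.sum_congr rfl fun k _ => ?_
        exact integral_mul_const _ _

end Main

end AvgFaceAux



noncomputable def Gface {n : ℕ} (x : Fin (n+1) → Euc n) (f : Euc n → ℝ) (K : Finset (Fin (n+1))) : ℝ :=
  f ((K.card : ℝ)⁻¹ • ∑ i ∈ K, x i)

theorem avg_le_sum_face_barycenters (n : ℕ) (x : Fin (n + 1) → EuclideanSpace ℝ (Fin n))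
    (hx : AffineIndependent ℝ x) (f : EuclideanSpace ℝ (Fin n) → ℝ)
    (hf : ConvexOn ℝ (convexHull ℝ (Set.range x)) f) :
    (⨍ y in convexHull ℝ (Set.range x), f y) ≤
      (1 / ((n : ℝ) + 1)) *
        ∑ k ∈ Finset.Icc 1 (n + 1),
          (((n + 1).choose k : ℝ))⁻¹ *
            ∑ K ∈ Finset.powersetCard k (Finset.univ : Finset (Fin (n + 1))),
              f ((K.card : ℝ)⁻¹ • ∑ i ∈ K, x i) := by
  classical
  set V : ℝ := (volume (convexHull ℝ (Set.range x))).toReal with hV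
  have hVpos : 0 < V := ENNReal.toReal_pos (volD_pos x hx).ne' (volD_lt_top x).ne
  set N : ℝ := (Nat.factorial (n+1) : ℝ) with hN
  have hNpos : 0 < N := by rw [hN]; exact_mod_cast Nat.factorial_pos (n+1)
  have hn1 : (0:ℝ) < (n:ℝ)+1 := by positivity
  have hCpos : ∀ k ∈ range (n+1), (0:ℝ) < ((n+1).choose (k+1) : ℝ) := by
    intro k hk
    have hk' := Finset.mem_range.mp hk
    exact_mod_cast Nat.choose_pos (by omega)
  have hIc : ∀ σ : Equiv.Perm (Fin (n+1)), ∀ k ∈ range (n+1),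
      (∫ y in SS x hx σ, lam x hx σ k y) = V / (N * ((n:ℝ)+1)) := by
    intro σ k hk
    rw [int_lam_eq x hx σ k, int_lam_val x hx (Finset.mem_range.mp hk)]
  have hfbb : ∀ σ : Equiv.Perm (Fin (n+1)), ∀ k ∈ range (n+1),
      f (bb x σ k) = Gface x f (Kset σ k) := by
    intro σ k hk
    have hcard : (((Kset σ k).card : ℕ) : ℝ) = (k:ℝ)+1 := by
      rw [Kset_card σ (Finset.mem_range.mp hk)]; push_cast; ring
    rw [Gface, hcard, bb]
  -- step 1 : bound the integral by the subdivision pieces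
  have step1 : ∫ y in convexHull ℝ (Set.range x), f y ≤
      ∑ k ∈ range (n+1), (V / (N * ((n:ℝ)+1)))
        * ∑ σ : Equiv.Perm (Fin (n+1)), Gface x f (Kset σ k) := by
    rw [int_D_eq_sum x hx (f_intOn x hx hf)]
    calc ∑ σ : Equiv.Perm (Fin (n+1)), ∫ y in SS x hx σ, f y
        ≤ ∑ σ : Equiv.Perm (Fin (n+1)),
            ∑ k ∈ range (n+1), (∫ y in SS x hx σ, lam x hx σ k y) * f (bb x σ k) :=
          Finset.sum_le_sum (fun σ _ => int_SS_f_le x hx hf σ)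
      _ = ∑ σ : Equiv.Perm (Fin (n+1)),
            ∑ k ∈ range (n+1), (V / (N * ((n:ℝ)+1))) * Gface x f (Kset σ k) := by
          refine Finset.sum_congr rfl fun σ _ => Finset.sum_congr rfl fun k hk => ?_
          rw [hIc σ k hk, hfbb σ k hk]
      _ = ∑ k ∈ range (n+1), (V / (N * ((n:ℝ)+1)))
            * ∑ σ : Equiv.Perm (Fin (n+1)), Gface x f (Kset σ k) := by
          rw [Finset.sum_comm]
          refine Finset.sum_congr rfl fun k _ => ?_
          rw [Finset.mul_sum]
  -- step 2 : counting
  have step2 : ∀ k ∈ range (n+1),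
      ∑ σ : Equiv.Perm (Fin (n+1)), Gface x f (Kset σ k)
        = N / ((n+1).choose (k+1) : ℝ)
            * ∑ K ∈ Finset.powersetCard (k+1) (Finset.univ : Finset (Fin (n+1))),
                Gface x f K := by
    intro k hk
    have hP : (Finset.univ.filter fun i : Fin (n+1) => (i:ℕ) ≤ k).card = k+1 := by
      have h1 := Kset_card (n := n) (Equiv.refl _) (Finset.mem_range.mp hk)
      rw [Kset] at h1
      simpa using h1
    have h := perm_prefix_sum (Finset.univ.filter fun i : Fin (n+1) => (i:ℕ) ≤ k) hP
      (Gface x f)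
    have hKset : ∀ σ : Equiv.Perm (Fin (n+1)),
        (Finset.univ.filter fun i : Fin (n+1) => (i:ℕ) ≤ k).image ⇑σ = Kset σ k :=
      fun σ => rfl
    rw [Finset.sum_congr rfl (fun σ _ => by rw [hKset σ])] at h
    have hC := hCpos k hk
    rw [div_mul_eq_mul_div, eq_div_iff hC.ne']
    rw [hN]
    linarith [h]
  -- step 3 : combine
  have step3 : ∫ y in convexHull ℝ (Set.range x), f y
      ≤ V * ((1/((n:ℝ)+1)) * ∑ k ∈ range (n+1), (((n+1).choose (k+1) : ℝ))⁻¹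
          * ∑ K ∈ Finset.powersetCard (k+1) (Finset.univ : Finset (Fin (n+1))),
              Gface x f K) := by
    refine step1.trans (le_of_eq ?_)
    have hterm : ∀ k ∈ range (n+1),
        (V / (N * ((n:ℝ)+1))) * ∑ σ : Equiv.Perm (Fin (n+1)), Gface x f (Kset σ k)
          = V * ((1/((n:ℝ)+1)) * ((((n+1).choose (k+1) : ℝ))⁻¹
              * ∑ K ∈ Finset.powersetCard (k+1) (Finset.univ : Finset (Fin (n+1))),
                  Gface x f K)) := by
      intro k hk
      rw [step2 k hk]
      have hC := hCpos k hk
      field_simp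
    rw [Finset.sum_congr rfl hterm, ← Finset.mul_sum, ← Finset.mul_sum]
  -- reindex the Icc sum
  have hreidx : ∑ k ∈ Finset.Icc 1 (n+1), (((n+1).choose k : ℝ))⁻¹
        * ∑ K ∈ Finset.powersetCard k (Finset.univ : Finset (Fin (n+1))), Gface x f K
      = ∑ k ∈ range (n+1), (((n+1).choose (k+1) : ℝ))⁻¹
        * ∑ K ∈ Finset.powersetCard (k+1) (Finset.univ : Finset (Fin (n+1))),
            Gface x f K := by
    rw [← Finset.Ico_add_one_right_eq_Icc, Finset.sum_Ico_eq_sum_range]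
    have h2 : n + 1 + 1 - 1 = n + 1 := by omega
    rw [h2]
    refine Finset.sum_congr rfl fun k _ => ?_
    rw [add_comm 1 k]
  -- finish
  have hgoal : (⨍ y in convexHull ℝ (Set.range x), f y) ≤
      (1 / ((n : ℝ) + 1)) *
        ∑ k ∈ Finset.Icc 1 (n + 1),
          (((n + 1).choose k : ℝ))⁻¹ *
            ∑ K ∈ Finset.powersetCard k (Finset.univ : Finset (Fin (n + 1))),
              Gface x f K := by
    rw [setAverage_eq, measureReal_def, smul_eq_mul, ← hV, hreidx]
    calc V⁻¹ * ∫ y in convexHull ℝ (Set.range x), f y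
        ≤ V⁻¹ * (V * ((1/((n:ℝ)+1)) * ∑ k ∈ range (n+1), (((n+1).choose (k+1) : ℝ))⁻¹
            * ∑ K ∈ Finset.powersetCard (k+1) (Finset.univ : Finset (Fin (n+1))),
                Gface x f K)) :=
          mul_le_mul_of_nonneg_left step3 (inv_nonneg.mpr hVpos.le)
      _ = (1/((n:ℝ)+1)) * ∑ k ∈ range (n+1), (((n+1).choose (k+1) : ℝ))⁻¹
            * ∑ K ∈ Finset.powersetCard (k+1) (Finset.univ : Finset (Fin (n+1))),
                Gface x f K := by
          rw [← mul_assoc, inv_mul_cancel₀ hVpos.ne', one_mul]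
  exact hgoal
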